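/- If θ, θ̃ ∈ (0, 1/2], then D(θ‖θ̃) ≥ (θ−θ̃)² / (2·θ*(1−θ*)), where θ* = max{θ, θ̃} (the element of {θ, θ̃} closer to 1/2). -/

import Mathlib

noncomputable def klBern (θ θt : ℝ) : ℝ :=
  θ * Real.log (θ / θt) + (1 - θ) * Real.log ((1 - θ) / (1 - θt))

lemma klBern_hasDerivAt (θ c : ℝ) (hθ0 : 0 < θ) (hθ1 : θ < 1) (hc : c ≠ 0)
    {s : ℝ} (hs0 : 0 < s) (hs1 : s < 1) :
    HasDerivAt (fun s => klBern θ s - (θ - s) ^ 2 / (2 * c))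
      ((s - θ) / (s * (1 - s)) - (s - θ) / c) s := by
  have h1s : (0:ℝ) < 1 - s := by linarith
  have h1θ : (0:ℝ) < 1 - θ := by linarith
  have h1 : HasDerivAt (fun s : ℝ => θ / s) ((0 * s - θ * 1) / s ^ 2) s :=
    (hasDerivAt_const s θ).div (hasDerivAt_id s) hs0.ne'
  have h2 : HasDerivAt (fun s : ℝ => (1 - θ) / (1 - s))
      ((0 * (1 - s) - (1 - θ) * (0 - 1)) / (1 - s) ^ 2) s :=
    (hasDerivAt_const s (1 - θ)).div ((hasDerivAt_const s 1).sub (hasDerivAt_id s)) h1s.ne'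
  have h1l : HasDerivAt (fun y => Real.log (θ / y)) (-(1 / s)) s := by
    convert h1.log (div_ne_zero hθ0.ne' hs0.ne') using 1
    field_simp
    ring
  have h2l : HasDerivAt (fun y => Real.log ((1 - θ) / (1 - y))) (1 / (1 - s)) s := by
    convert h2.log (div_ne_zero h1θ.ne' h1s.ne') using 1
    field_simp
    ring
  have h3 : HasDerivAt (fun s : ℝ => (θ - s) ^ 2 / (2 * c))
      ((2 : ℕ) * (θ - s) ^ 1 * (0 - 1) / (2 * c)) s :=
    (((hasDerivAt_const s θ).sub (hasDerivAt_id s)).pow 2).div_const (2 * c)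
  have := ((h1l.const_mul θ).add (h2l.const_mul (1 - θ))).sub h3
  refine this.congr_deriv ?_
  field_simp
  ring

lemma klBern_self (θ : ℝ) (h0 : 0 < θ) (h1 : θ < 1) : klBern θ θ = 0 := by
  unfold klBern
  rw [div_self h0.ne', div_self (by linarith : (1:ℝ) - θ ≠ 0), Real.log_one]
  ring

theorem kl_lower_bound_near_boundary (θ θt : ℝ)
    (hθ : θ ∈ Set.Ioc (0:ℝ) (1/2)) (hθt : θt ∈ Set.Ioc (0:ℝ) (1/2)) :
    klBern θ θt ≥ (θ - θt) ^ 2 / (2 * max θ θt * (1 - max θ θt)) := by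
  obtain ⟨hθ0, hθ2⟩ := hθ
  obtain ⟨ht0, ht2⟩ := hθt
  have hθ1 : θ < 1 := by linarith
  have ht1 : θt < 1 := by linarith
  rcases le_total θt θ with hle | hle
  · -- max = θ, c = θ(1-θ)
    have hc : 0 < θ * (1 - θ) := mul_pos hθ0 (by linarith)
    have hanti : AntitoneOn (fun s => klBern θ s - (θ - s) ^ 2 / (2 * (θ * (1 - θ))))
        (Set.Icc θt θ) := by
      apply antitoneOn_of_deriv_nonpos (convex_Icc _ _)
      · intro x hx
        exact (klBern_hasDerivAt θ _ hθ0 hθ1 hc.ne' (lt_of_lt_of_le ht0 hx.1)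
          (lt_of_le_of_lt hx.2 hθ1)).continuousAt.continuousWithinAt
      · intro x hx
        rw [interior_Icc] at hx
        exact (klBern_hasDerivAt θ _ hθ0 hθ1 hc.ne' (lt_trans ht0 hx.1)
          (lt_trans hx.2 hθ1)).differentiableAt.differentiableWithinAt
      · intro x hx
        rw [interior_Icc] at hx
        obtain ⟨hx1, hx2⟩ := hx
        have hx0 : 0 < x := lt_trans ht0 hx1
        have hx1' : x < 1 := lt_trans hx2 hθ1
        rw [(klBern_hasDerivAt θ _ hθ0 hθ1 hc.ne' hx0 hx1').deriv]
        have hxp : 0 < x * (1 - x) := mul_pos hx0 (by linarith)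
        rw [div_sub_div _ _ hxp.ne' hc.ne']
        apply div_nonpos_of_nonpos_of_nonneg
        · nlinarith [mul_nonneg (mul_self_nonneg (θ - x)) (by linarith : (0:ℝ) ≤ 1 - θ - x)]
        · positivity
    have hfinal := hanti (Set.left_mem_Icc.2 hle) (Set.right_mem_Icc.2 hle) hle
    simp only [] at hfinal
    have hgθ : klBern θ θ - (θ - θ) ^ 2 / (2 * (θ * (1 - θ))) = 0 := by
      rw [klBern_self θ hθ0 hθ1]; ring
    rw [max_eq_left hle]
    have heq : (θ - θt) ^ 2 / (2 * θ * (1 - θ)) =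
        (θ - θt) ^ 2 / (2 * (θ * (1 - θ))) := by ring_nf
    rw [heq]
    linarith
  · -- max = θt, c = θt(1-θt)
    have hc : 0 < θt * (1 - θt) := mul_pos ht0 (by linarith)
    have hmono : MonotoneOn (fun s => klBern θ s - (θ - s) ^ 2 / (2 * (θt * (1 - θt))))
        (Set.Icc θ θt) := by
      apply monotoneOn_of_deriv_nonneg (convex_Icc _ _)
      · intro x hx
        exact (klBern_hasDerivAt θ _ hθ0 hθ1 hc.ne' (lt_of_lt_of_le hθ0 hx.1)
          (lt_of_le_of_lt hx.2 ht1)).continuousAt.continuousWithinAt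
      · intro x hx
        rw [interior_Icc] at hx
        exact (klBern_hasDerivAt θ _ hθ0 hθ1 hc.ne' (lt_trans hθ0 hx.1)
          (lt_trans hx.2 ht1)).differentiableAt.differentiableWithinAt
      · intro x hx
        rw [interior_Icc] at hx
        obtain ⟨hx1, hx2⟩ := hx
        have hx0 : 0 < x := lt_trans hθ0 hx1
        have hx1' : x < 1 := lt_trans hx2 ht1
        rw [(klBern_hasDerivAt θ _ hθ0 hθ1 hc.ne' hx0 hx1').deriv]
        have hxp : 0 < x * (1 - x) := mul_pos hx0 (by linarith)
        rw [div_sub_div _ _ hxp.ne' hc.ne']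
        apply div_nonneg
        · nlinarith [mul_nonneg (mul_nonneg (by linarith : (0:ℝ) ≤ x - θ)
            (by linarith : (0:ℝ) ≤ θt - x)) (by linarith : (0:ℝ) ≤ 1 - θt - x)]
        · positivity
    have hfinal := hmono (Set.left_mem_Icc.2 hle) (Set.right_mem_Icc.2 hle) hle
    simp only [] at hfinal
    have hgθ : klBern θ θ - (θ - θ) ^ 2 / (2 * (θt * (1 - θt))) = 0 := by
      rw [klBern_self θ hθ0 hθ1]; ring
    rw [max_eq_right hle]
    have heq : (θ - θt) ^ 2 / (2 * θt * (1 - θt)) =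
        (θ - θt) ^ 2 / (2 * (θt * (1 - θt))) := by ring_nf
    rw [heq]
    linarith
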